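/- For all n ≥ 1 and k ≥ 2, f(n,k) ≤ 2^⌈n/k⌉ · f(n), where f(n) is the number of primitive subsets of {1,...,n} and f(n,k) is the number of k-core subsets of {1,...,n}. -/

import Mathlib

open Finset Filter
open scoped Classical

/-- A finite set of naturals is primitive: no element divides another distinct element. -/
def Primitive (S : Finset ℕ) : Prop := ∀ a ∈ S, ∀ b ∈ S, a ≠ b → ¬ a ∣ b

/-- `f n` is the number of primitive subsets of `{1,...,n}`. -/
noncomputable def f (n : ℕ) : ℕ :=
  ((Finset.Icc 1 n).powerset.filter Primitive).card

/-- A natural is `k`-smooth: all its prime factors are at most the `k`-th prime. -/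
def SmoothNat (k m : ℕ) : Prop := ∀ p, p.Prime → p ∣ m → p ≤ Nat.nth Nat.Prime (k - 1)

/-- A set is `k`-core: no two distinct elements `a ∣ b` with `b/a` having all
prime factors at most the `k`-th prime. -/
def KCore (k : ℕ) (S : Finset ℕ) : Prop :=
  ∀ a ∈ S, ∀ b ∈ S, a ≠ b → ¬ (a ∣ b ∧ SmoothNat k (b / a))

/-- `fk n k` is the number of `k`-core subsets of `{1,...,n}`. -/
noncomputable def fk (n k : ℕ) : ℕ :=
  ((Finset.Icc 1 n).powerset.filter (KCore k)).card

/-- `Dk k` is the product of the first `k` primes. -/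
noncomputable def Dk (k : ℕ) : ℕ := ∏ i ∈ Finset.range k, Nat.nth Nat.Prime i

/-- `Pk k x` is the number of primitive subsets of the set of `k`-smooth integers in `{1,...,x}`. -/
noncomputable def Pk (k x : ℕ) : ℕ :=
  (((Finset.Icc 1 x).filter (SmoothNat k)).powerset.filter Primitive).card

/-- For all `n ≥ 1` and `k ≥ 2`, `f(n,k) ≤ 2 ^ ⌈n/k⌉ * f(n)`. -/
theorem stmt_4 (n k : ℕ) (hn : 1 ≤ n) (hk : 2 ≤ k) :
    fk n k ≤ 2 ^ ((n + k - 1) / k) * f n := by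
  classical
  have key : fk n k ≤
      ((Finset.Icc 1 (n / k)).powerset ×ˢ ((Finset.Icc 1 n).powerset.filter Primitive)).card := by
    rw [fk]
    apply Finset.card_le_card_of_injOn
      (fun S => (S ∩ Finset.Icc 1 (n / k), S \ Finset.Icc 1 (n / k)))
    · intro S hS
      simp only [Finset.mem_coe, Finset.mem_filter, Finset.mem_powerset] at hS
      obtain ⟨hSsub, hSk⟩ := hS
      simp only [Finset.mem_coe, Finset.mem_product, Finset.mem_filter, Finset.mem_powerset]
      refine ⟨Finset.inter_subset_right, (Finset.sdiff_subset).trans hSsub, ?_⟩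
      intro a ha b hb hab hdvd
      have haS : a ∈ S := (Finset.mem_sdiff.mp ha).1
      have hbS : b ∈ S := (Finset.mem_sdiff.mp hb).1
      apply hSk a haS b hbS hab
      refine ⟨hdvd, ?_⟩
      have ha1 : 1 ≤ a := (Finset.mem_Icc.mp (hSsub haS)).1
      have hbn : b ≤ n := (Finset.mem_Icc.mp (hSsub hbS)).2
      have ham' : n / k + 1 ≤ a := by
        have h2 := (Finset.mem_sdiff.mp ha).2
        rw [Finset.mem_Icc] at h2
        omega
      have hb1 : 1 ≤ b := (Finset.mem_Icc.mp (hSsub hbS)).1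
      have hab' : a ≤ b := Nat.le_of_dvd (by omega) hdvd
      have hac : a * (b / a) = b := Nat.mul_div_cancel' hdvd
      have hblt : b < a * k := by
        have h3 : k * (n / k + 1) ≤ k * a := Nat.mul_le_mul_left k ham'
        have h4 : n < k * (n / k + 1) := by
          have hdm := Nat.div_add_mod n k
          have hmod := Nat.mod_lt n (show 0 < k by omega)
          rw [Nat.mul_add, Nat.mul_one]
          omega
        calc b ≤ n := hbn
          _ < k * (n / k + 1) := h4
          _ ≤ k * a := h3
          _ = a * k := Nat.mul_comm k a
      have hclt : b / a < k := Nat.lt_of_mul_lt_mul_left (a := a) (by rw [hac]; exact hblt)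
      have hc1 : 1 ≤ b / a := Nat.one_le_div_iff (by omega) |>.mpr hab'
      intro p hp hpc
      have hpk : p ≤ b / a := Nat.le_of_dvd (by omega) hpc
      have hnth : k - 1 ≤ Nat.nth Nat.Prime (k - 1) :=
        (Nat.nth_strictMono Nat.infinite_setOf_prime).le_apply
      omega
    · intro S hS T hT heq
      simp only [Prod.mk.injEq] at heq
      have h1 : S ∩ Finset.Icc 1 (n / k) ∪ S \ Finset.Icc 1 (n / k) = S :=
        sup_inf_sdiff S _
      have h2 : T ∩ Finset.Icc 1 (n / k) ∪ T \ Finset.Icc 1 (n / k) = T :=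
        sup_inf_sdiff T _
      rw [← h1, ← h2, heq.1, heq.2]
  have hcard : ((Finset.Icc 1 (n / k)).powerset ×ˢ
      ((Finset.Icc 1 n).powerset.filter Primitive)).card = 2 ^ (n / k) * f n := by
    rw [Finset.card_product, Finset.card_powerset, Nat.card_Icc, f]
    simp
  have hmle : n / k ≤ (n + k - 1) / k := Nat.div_le_div_right (by omega)
  calc fk n k ≤ 2 ^ (n / k) * f n := by rw [← hcard]; exact key
    _ ≤ 2 ^ ((n + k - 1) / k) * f n :=
      Nat.mul_le_mul_right _ (Nat.pow_le_pow_right (by omega) hmle)
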